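/- Let (V,C') be an instance of Positive 1-in-3 SAT in which each variable appears in exactly three clauses, and let U be the unrooted phylogenetic network constructed from (V,C') via the caterpillar gadget and the degree-5 root gadget; every non-leaf vertex of U has degree 5. Then there is a truth assignment for V that sets exactly one variable of each clause in C' to T if and only if U has a funneled C_A-orientation, where C is the class of rooted phylogenetic networks. -/

import Mathlib

/-!
Common definitions: rooted (pseudo/phylogenetic) networks represented as arc
relations `D : V → V → Prop` on a vertex type `V`, with in/out-degrees measured
by `Set.ncard`, together with the orientation notions (Variant A, Variant B,
orientations of connector networks) from the paper.
-/

section Prelude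

universe u
variable {V : Type u}

/-- In-degree of `v` in the digraph with arc relation `D`. -/
noncomputable def inDeg (D : V → V → Prop) (v : V) : ℕ := Set.ncard {u | D u v}

/-- Out-degree of `v` in the digraph with arc relation `D`. -/
noncomputable def outDeg (D : V → V → Prop) (v : V) : ℕ := Set.ncard {u | D v u}

/-- A digraph is acyclic if it has no directed cycle. -/
def Acyclic (D : V → V → Prop) : Prop := ∀ v, ¬ Relation.TransGen D v v

/-- A tree vertex: in-degree 1 and out-degree at least 1. -/
def IsTreeVertex (D : V → V → Prop) (v : V) : Prop := inDeg D v = 1 ∧ 1 ≤ outDeg D v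

/-- A leaf (sink) of a digraph. -/
def IsLeafVertex (D : V → V → Prop) (v : V) : Prop := outDeg D v = 0

/-- Tree-child: every non-leaf vertex has a child that is a tree vertex or a leaf. -/
def TreeChild (D : V → V → Prop) : Prop :=
  ∀ v, ¬ IsLeafVertex D v → ∃ u, D v u ∧ (IsTreeVertex D u ∨ IsLeafVertex D u)

/-- Funneled: every reticulation (in-degree at least 2) has out-degree 1. -/
def Funneled (D : V → V → Prop) : Prop := ∀ v, 2 ≤ inDeg D v → outDeg D v = 1

/-- An arc `(a,b)` is a shortcut if there is another directed path from `a` to `b`. -/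
def IsShortcut (D : V → V → Prop) (a b : V) : Prop :=
  D a b ∧ ∃ c, D a c ∧ Relation.TransGen D c b

/-- Normal: tree-child and without shortcuts. -/
def NormalNet (D : V → V → Prop) : Prop := TreeChild D ∧ ∀ a b, ¬ IsShortcut D a b

/-- `D` is a rooted pseudo network with root `ρ` whose set of leaves is `X`
(leaves are labelled by themselves). -/
def IsRootedPseudoNetwork (D : V → V → Prop) (ρ : V) (X : Set V) : Prop :=
  Acyclic D ∧ (∀ v, ¬ D v v) ∧
  inDeg D ρ = 0 ∧ 1 ≤ outDeg D ρ ∧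
  (∀ v, inDeg D v = 0 → v = ρ) ∧
  (∀ v, outDeg D v = 0 → inDeg D v = 1) ∧
  {v | outDeg D v = 0} = X ∧
  (∀ v, v ≠ ρ → outDeg D v ≠ 0 → 1 ≤ inDeg D v ∧ 1 ≤ outDeg D v)

/-- `D` is a rooted phylogenetic network with root `ρ` and leaf set `X`:
additionally every internal vertex has in-degree 1 and out-degree ≥ 2, or
in-degree ≥ 2 and out-degree ≥ 1. -/
def IsRootedPhyloNetwork (D : V → V → Prop) (ρ : V) (X : Set V) : Prop :=
  Acyclic D ∧ (∀ v, ¬ D v v) ∧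
  inDeg D ρ = 0 ∧ 1 ≤ outDeg D ρ ∧
  (∀ v, inDeg D v = 0 → v = ρ) ∧
  (∀ v, outDeg D v = 0 → inDeg D v = 1) ∧
  {v | outDeg D v = 0} = X ∧
  (∀ v, v ≠ ρ → outDeg D v ≠ 0 →
    (inDeg D v = 1 ∧ 2 ≤ outDeg D v) ∨ (2 ≤ inDeg D v ∧ 1 ≤ outDeg D v))

/-- `{u,w} = {a,b}` as unordered pairs. -/
def SamePair (u w a b : V) : Prop := (u = a ∧ w = b) ∨ (u = b ∧ w = a)

/-- A Variant-A orientation of the undirected graph `adj` obtained by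
subdividing the edge `{a,b}` with a new root vertex `none` and directing all
edges; `D` is the resulting arc relation on `Option V` (the root is `none`). -/
def VariantA (adj : V → V → Prop) (a b : V) (D : Option V → Option V → Prop) : Prop :=
  adj a b ∧
  D none (some a) ∧ D none (some b) ∧
  (∀ o, ¬ D o none) ∧
  (∀ u, D none (some u) → u = a ∨ u = b) ∧
  (∀ u w : V, D (some u) (some w) → adj u w ∧ ¬ SamePair u w a b) ∧
  (∀ u w : V, adj u w → ¬ SamePair u w a b → (D (some u) (some w) ↔ ¬ D (some w) (some u)))

/-- `D` assigns to each edge of `adj` exactly one direction (used for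
Variant-B orientations and for orientations of connector networks). -/
def IsOrientation (adj D : V → V → Prop) : Prop :=
  (∀ a b, D a b → adj a b) ∧ (∀ a b, adj a b → (D a b ↔ ¬ D b a))

/-- An orientation of a connector network with labelled leaves `L` and
connector leaves `Uc` that is acyclic, in which every labelled leaf has
out-degree 0 and every vertex not in `L ∪ Uc` has in-degree ≥ 1 and
out-degree ≥ 1 (the standing hypotheses for the compatibility notions). -/
def GoodOrientation (adj D : V → V → Prop) (L Uc : Set V) : Prop :=
  IsOrientation adj D ∧ Acyclic D ∧ (∀ v ∈ L, outDeg D v = 0) ∧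
  (∀ v, v ∉ L ∪ Uc → 1 ≤ inDeg D v ∧ 1 ≤ outDeg D v)

/-- F-compatible: every vertex of in-degree at least 2 has out-degree 1. -/
def FCompatible (D : V → V → Prop) : Prop := ∀ v, 2 ≤ inDeg D v → outDeg D v = 1

/-- TC-compatible orientation of a connector network. -/
def TCCompatible (D : V → V → Prop) (L Uc : Set V) : Prop :=
  ∀ v, v ∉ L ∪ Uc → ∃ u, D v u ∧ (u ∈ L ∪ Uc ∨ (inDeg D u = 1 ∧ 1 ≤ outDeg D u))

/-- Strongly TC-compatible orientation of a connector network. -/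
def StrongTCCompatible (D : V → V → Prop) (L Uc : Set V) : Prop :=
  ∀ v, v ∉ L ∪ Uc → ∃ u, D v u ∧ (u ∈ L ∨ (inDeg D u = 1 ∧ 1 ≤ outDeg D u))

end Prelude

namespace PaperFormalization

/-- Vertices of the unrooted phylogenetic network `U` constructed from an
instance of Positive 1-in-3 SAT (variables `Fin n`, clauses
`cl : Fin m → Finset (Fin n)` of size 3, each variable in exactly three
clauses): the degree-5 root gadget `s,u,u',v,v'` with its pendant leaves
(its connector leaf `r` identified with the caterpillar connector leaf and
the resulting degree-2 vertex suppressed, giving the edge `{s,p_n}`), the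
caterpillar gadget `p i` with pendant leaves `pl i, pl' i, pl0`, variable
vertices `x i` with pendant leaves `xl i`, and clause vertices `c j` each
with two pendant leaves `cleaf j k`. -/
inductive WV (n m : ℕ) : Type
  | s | u | u' | v | v'
  | ul (k : Fin 2) | ul' (k : Fin 2) | vl (k : Fin 3) | vl' (k : Fin 3)
  | p (i : Fin n) | pl (i : Fin n) | pl' (i : Fin n) | pl0
  | x (i : Fin n) | xl (i : Fin n)
  | c (j : Fin m) | cleaf (j : Fin m) (k : Fin 2)

/-- The edges of `U` (one fixed orientation of each edge). -/
def wBase {n m : ℕ} (cl : Fin m → Finset (Fin n)) : WV n m → WV n m → Prop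
  | .s, .u => True
  | .s, .u' => True
  | .s, .v => True
  | .s, .v' => True
  | .u, .u' => True
  | .u, .v => True
  | .u', .v' => True
  | .u, .ul _ => True
  | .u', .ul' _ => True
  | .v, .vl _ => True
  | .v', .vl' _ => True
  | .s, .p i => (i : ℕ) = n - 1
  | .p i, .p j => (i : ℕ) + 1 = (j : ℕ)
  | .p i, .x j => i = j
  | .p i, .pl j => i = j
  | .p i, .pl' j => i = j
  | .p i, .pl0 => (i : ℕ) = 0
  | .x i, .xl j => i = j
  | .x i, .c j => i ∈ cl j
  | .c j, .cleaf j' _ => j = j'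
  | _, _ => False

/-- Adjacency relation of `U`. -/
def wAdj {n m : ℕ} (cl : Fin m → Finset (Fin n)) (a b : WV n m) : Prop :=
  wBase cl a b ∨ wBase cl b a

/-- The (labelled) leaves of `U`. -/
def wLeaves (n m : ℕ) : Set (WV n m) :=
  {w | match w with
    | .ul _ => True
    | .ul' _ => True
    | .vl _ => True
    | .vl' _ => True
    | .pl _ => True
    | .pl' _ => True
    | .pl0 => True
    | .xl _ => True
    | .cleaf _ _ => True
    | _ => False}

end PaperFormalization

namespace PaperFormalization

section Toolkit
universe u
variable {α : Type u}

lemma ncard_setOf_eq (a : α) : Set.ncard {z | z = a} = 1 := by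
  have : {z | z = a} = {a} := by ext z; simp
  rw [this, Set.ncard_singleton]

lemma ncard2 (a b : α) (hab : a ≠ b) : ({a, b} : Set α).ncard = 2 := Set.ncard_pair hab

lemma ncard4 (a b c d : α) (hab : a ≠ b) (hac : a ≠ c) (had : a ≠ d)
    (hbc : b ≠ c) (hbd : b ≠ d) (hcd : c ≠ d) :
    ({a, b, c, d} : Set α).ncard = 4 := by
  have h3 : ({b, c, d} : Set α).ncard = 3 := by
    have h2 : ({c, d} : Set α).ncard = 2 := Set.ncard_pair hcd
    have : b ∉ ({c, d} : Set α) := by simp [hbc, hbd]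
    rw [Set.ncard_insert_of_notMem this ((Set.finite_singleton d).insert c), h2]
  have : a ∉ ({b, c, d} : Set α) := by simp [hab, hac, had]
  rw [Set.ncard_insert_of_notMem this
    (((Set.finite_singleton d).insert c).insert b), h3]

variable {D : α → α → Prop}

lemma exists_of_inDeg_ne_zero {v : α} (h : inDeg D v ≠ 0) : ∃ z, D z v := by
  have := Set.nonempty_of_ncard_ne_zero h
  exact this

lemma two_le_outDeg [Finite α] {v z1 z2 : α} (h1 : D v z1) (h2 : D v z2) (hne : z1 ≠ z2) :
    2 ≤ outDeg D v := by
  have hsub : ({z1, z2} : Set α) ⊆ {z | D v z} := by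
    intro z hz; rcases hz with rfl | hz; · exact h1
    · simp only [Set.mem_singleton_iff] at hz; subst hz; exact h2
  calc 2 = ({z1, z2} : Set α).ncard := (Set.ncard_pair hne).symm
    _ ≤ _ := Set.ncard_le_ncard hsub (Set.toFinite _)

lemma two_le_inDeg [Finite α] {v z1 z2 : α} (h1 : D z1 v) (h2 : D z2 v) (hne : z1 ≠ z2) :
    2 ≤ inDeg D v := by
  have hsub : ({z1, z2} : Set α) ⊆ {z | D z v} := by
    intro z hz; rcases hz with rfl | hz; · exact h1
    · simp only [Set.mem_singleton_iff] at hz; subst hz; exact h2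
  calc 2 = ({z1, z2} : Set α).ncard := (Set.ncard_pair hne).symm
    _ ≤ _ := Set.ncard_le_ncard hsub (Set.toFinite _)

lemma in_unique {v z1 z2 : α} (h : inDeg D v = 1) (h1 : D z1 v) (h2 : D z2 v) : z1 = z2 := by
  obtain ⟨x, hx⟩ := Set.ncard_eq_one.mp h
  have e1 : z1 ∈ {z | D z v} := h1
  have e2 : z2 ∈ {z | D z v} := h2
  rw [hx] at e1 e2; simp only [Set.mem_singleton_iff] at e1 e2; rw [e1, e2]

lemma out_unique {v z1 z2 : α} (h : outDeg D v = 1) (h1 : D v z1) (h2 : D v z2) : z1 = z2 := by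
  obtain ⟨x, hx⟩ := Set.ncard_eq_one.mp h
  have e1 : z1 ∈ {z | D v z} := h1
  have e2 : z2 ∈ {z | D v z} := h2
  rw [hx] at e1 e2; simp only [Set.mem_singleton_iff] at e1 e2; rw [e1, e2]

lemma not_arc_of_outDeg_zero [Finite α] {v z : α} (h : outDeg D v = 0) : ¬ D v z := by
  intro hz
  have : {z | D v z} = ∅ := (Set.ncard_eq_zero (Set.toFinite _)).mp h
  · exact absurd (this ▸ hz : z ∈ (∅ : Set α)) (Set.notMem_empty z)

end Toolkit

deriving instance DecidableEq for WV
deriving instance Fintype for WV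

namespace Fwd

variable {n m : ℕ}

/-- The forward orientation on `WV` determined by a truth assignment `β`. -/
def fwd' (cl : Fin m → Finset (Fin n)) (β : Fin n → Bool) : WV n m → WV n m → Prop
  | .u, .s => True
  | .u, .v => True
  | .u', .s => True
  | .u', .v' => True
  | .v, .s => True
  | .v', .s => True
  | .u, .ul _ => True
  | .u', .ul' _ => True
  | .v, .vl _ => True
  | .v', .vl' _ => True
  | .s, .p i => (i : ℕ) = n - 1
  | .p i, .p j => (j : ℕ) + 1 = (i : ℕ)
  | .p i, .x j => i = j
  | .p i, .pl j => i = j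
  | .p i, .pl' j => i = j
  | .p i, .pl0 => (i : ℕ) = 0
  | .x i, .xl j => i = j
  | .x i, .c j => i ∈ cl j ∧ β i = true
  | .c j, .x i => i ∈ cl j ∧ β i = false
  | .c j, .cleaf j' _ => j = j'
  | _, _ => False

def fwd (cl : Fin m → Finset (Fin n)) (β : Fin n → Bool) :
    Option (WV n m) → Option (WV n m) → Prop
  | none, some w => w = .u ∨ w = .u'
  | some w1, some w2 => fwd' cl β w1 w2
  | _, none => False

/-- rank function certifying acyclicity -/
def rk (β : Fin n → Bool) : Option (WV n m) → ℕ
  | none => 0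
  | some .u => 1
  | some .u' => 1
  | some .v => 2
  | some .v' => 2
  | some .s => 3
  | some (.p i) => 3 + (n - (i : ℕ))
  | some (.x i) => if β i then n + 4 else n + 6
  | some (.c _) => n + 5
  | _ => n + 8

lemma rk_lt {cl : Fin m → Finset (Fin n)} {β : Fin n → Bool} :
    ∀ {o1 o2 : Option (WV n m)}, fwd cl β o1 o2 → rk β o1 < rk β o2 := by
  intro o1 o2 h
  match o1, o2 with
  | none, none => exact absurd h (by simp [fwd])
  | some w, none => exact absurd h (by simp [fwd])
  | none, some w => rcases h with rfl | rfl <;> simp [rk]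
  | some w1, some w2 =>
    cases w1 <;> cases w2 <;>
      simp_all [fwd, fwd', rk] <;> first | omega | (split <;> omega) | (split <;> simp_all <;> omega)

set_option maxHeartbeats 1000000 in
lemma fwd_acyclic (cl : Fin m → Finset (Fin n)) (β : Fin n → Bool) : Acyclic (fwd cl β) := by
  intro v hv
  have : ∀ {o1 o2}, Relation.TransGen (fwd cl β) o1 o2 → rk β o1 < rk β o2 := by
    intro o1 o2 h
    induction h with
    | single h => exact rk_lt h
    | tail _ h ih => exact lt_trans ih (rk_lt h)
  exact absurd (this hv) (lt_irrefl _)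

end Fwd

namespace Fwd
variable {n m : ℕ} (cl : Fin m → Finset (Fin n)) (β : Fin n → Bool)

local notation "F" => fwd cl β

lemma inSet_none : {z | F z none} = ∅ := by
  ext z; cases z <;> simp [fwd]

lemma outSet_none : {z | F none z} = {some (WV.u : WV n m), some .u'} := by
  ext z; cases z with
  | none => simp [fwd]
  | some w => cases w <;> simp [fwd]

lemma inSet_s : {z | F z (some .s)} = {some (WV.u : WV n m), some .u', some .v, some .v'} := by
  ext z; cases z with
  | none => simp [fwd]
  | some w => cases w <;> simp [fwd, fwd']

lemma outSet_s (hn : 1 ≤ n) :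
    {z | F (some .s) z} = {some (WV.p ⟨n - 1, by omega⟩ : WV n m)} := by
  ext z; cases z with
  | none => simp [fwd]
  | some w => cases w <;> simp [fwd, fwd', Fin.ext_iff]

lemma inSet_u : {z | F z (some .u)} = {(none : Option (WV n m))} := by
  ext z; cases z with
  | none => simp [fwd]
  | some w => cases w <;> simp [fwd, fwd']

lemma inSet_u' : {z | F z (some .u')} = {(none : Option (WV n m))} := by
  ext z; cases z with
  | none => simp [fwd]
  | some w => cases w <;> simp [fwd, fwd']

lemma outSet_u :
    {z | F (some .u) z} = {some (WV.s : WV n m), some .v, some (.ul 0), some (.ul 1)} := by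
  ext z; cases z with
  | none => simp [fwd]
  | some w =>
    cases w <;> simp [fwd, fwd'] <;> omega

lemma outSet_u' :
    {z | F (some .u') z} = {some (WV.s : WV n m), some .v', some (.ul' 0), some (.ul' 1)} := by
  ext z; cases z with
  | none => simp [fwd]
  | some w =>
    cases w <;> simp [fwd, fwd'] <;> omega

lemma inSet_v : {z | F z (some .v)} = {some (WV.u : WV n m)} := by
  ext z; cases z with
  | none => simp [fwd]
  | some w => cases w <;> simp [fwd, fwd']

lemma inSet_v' : {z | F z (some .v')} = {some (WV.u' : WV n m)} := by
  ext z; cases z with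
  | none => simp [fwd]
  | some w => cases w <;> simp [fwd, fwd']

lemma outSet_v :
    {z | F (some .v) z} = {some (WV.s : WV n m), some (.vl 0), some (.vl 1), some (.vl 2)} := by
  ext z; cases z with
  | none => simp [fwd]
  | some w =>
    cases w <;> simp [fwd, fwd'] <;> omega

lemma outSet_v' :
    {z | F (some .v') z} = {some (WV.s : WV n m), some (.vl' 0), some (.vl' 1), some (.vl' 2)} := by
  ext z; cases z with
  | none => simp [fwd]
  | some w =>
    cases w <;> simp [fwd, fwd'] <;> omega

lemma inSet_ul (k : Fin 2) : {z | F z (some (.ul k))} = {some (WV.u : WV n m)} := by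
  ext z; cases z with
  | none => simp [fwd]
  | some w => cases w <;> simp [fwd, fwd']

lemma inSet_ul' (k : Fin 2) : {z | F z (some (.ul' k))} = {some (WV.u' : WV n m)} := by
  ext z; cases z with
  | none => simp [fwd]
  | some w => cases w <;> simp [fwd, fwd']

lemma inSet_vl (k : Fin 3) : {z | F z (some (.vl k))} = {some (WV.v : WV n m)} := by
  ext z; cases z with
  | none => simp [fwd]
  | some w => cases w <;> simp [fwd, fwd']

lemma inSet_vl' (k : Fin 3) : {z | F z (some (.vl' k))} = {some (WV.v' : WV n m)} := by
  ext z; cases z with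
  | none => simp [fwd]
  | some w => cases w <;> simp [fwd, fwd']

lemma inSet_p_top {i : Fin n} (hi : (i : ℕ) = n - 1) :
    {z | F z (some (.p i))} = {some (WV.s : WV n m)} := by
  ext z; cases z with
  | none => simp [fwd]
  | some w => cases w <;> simp [fwd, fwd', hi] <;> omega

lemma inSet_p_mid {i : Fin n} (hi : (i : ℕ) ≠ n - 1) :
    {z | F z (some (.p i))} = {some (WV.p ⟨(i : ℕ) + 1, by omega⟩ : WV n m)} := by
  ext z; cases z with
  | none => simp [fwd]
  | some w => cases w <;> simp [fwd, fwd', hi, Fin.ext_iff] <;> omega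

lemma outSet_p_bot {i : Fin n} (hi : (i : ℕ) = 0) :
    {z | F (some (.p i)) z} =
      {some (WV.x i : WV n m), some (.pl i), some (.pl' i), some .pl0} := by
  ext z; cases z with
  | none => simp [fwd]
  | some w => cases w <;> simp [fwd, fwd', hi, Fin.ext_iff] <;> omega

lemma outSet_p_mid {i : Fin n} (hi : (i : ℕ) ≠ 0) :
    {z | F (some (.p i)) z} =
      {some (WV.x i : WV n m), some (.pl i), some (.pl' i),
        some (.p ⟨(i : ℕ) - 1, by omega⟩)} := by
  ext z; cases z with
  | none => simp [fwd]
  | some w => cases w <;> simp [fwd, fwd', hi, Fin.ext_iff] <;> omega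

lemma inSet_pl (i : Fin n) : {z | F z (some (.pl i))} = {some (WV.p i : WV n m)} := by
  ext z; cases z with
  | none => simp [fwd]
  | some w => cases w <;> simp [fwd, fwd', Fin.ext_iff] <;> omega

lemma inSet_pl' (i : Fin n) : {z | F z (some (.pl' i))} = {some (WV.p i : WV n m)} := by
  ext z; cases z with
  | none => simp [fwd]
  | some w => cases w <;> simp [fwd, fwd', Fin.ext_iff] <;> omega

lemma inSet_pl0 (hn : 1 ≤ n) :
    {z | F z (some .pl0)} = {some (WV.p ⟨0, by omega⟩ : WV n m)} := by
  ext z; cases z with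
  | none => simp [fwd]
  | some w => cases w <;> simp [fwd, fwd', Fin.ext_iff]

lemma inSet_xl (i : Fin n) : {z | F z (some (.xl i))} = {some (WV.x i : WV n m)} := by
  ext z; cases z with
  | none => simp [fwd]
  | some w => cases w <;> simp [fwd, fwd', Fin.ext_iff] <;> omega

lemma inSet_cleaf (j : Fin m) (k : Fin 2) :
    {z | F z (some (.cleaf j k))} = {some (WV.c j : WV n m)} := by
  ext z; cases z with
  | none => simp [fwd]
  | some w => cases w <;> simp [fwd, fwd', Fin.ext_iff] <;> first | omega | (rw [Fin.val_inj]; simp [eq_comm]) | (simp [Fin.val_inj])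

lemma outSet_leaf (w : WV n m) (hw : w ∈ wLeaves n m) : {z | F (some w) z} = ∅ := by
  ext z; cases z with
  | none => simp [fwd]
  | some w' => cases w <;> simp_all [wLeaves] <;> cases w' <;> simp [fwd, fwd']

lemma inSet_x_true {i : Fin n} (hi : β i = true) :
    {z | F z (some (.x i))} = {some (WV.p i : WV n m)} := by
  ext z; cases z with
  | none => simp [fwd]
  | some w => cases w <;> simp [fwd, fwd', Fin.ext_iff, hi] <;> omega

lemma outSet_x_true {i : Fin n} (hi : β i = true) :
    {z | F (some (.x i)) z} =
      insert (some (WV.xl i : WV n m)) ((fun j => some (WV.c j)) '' {j | i ∈ cl j}) := by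
  ext z; cases z with
  | none => simp [fwd]
  | some w => cases w <;> simp [fwd, fwd', Fin.ext_iff, hi] <;> first | omega | (rw [Fin.val_inj]; simp [eq_comm]) | (simp [Fin.val_inj])

lemma outSet_x_false {i : Fin n} (hi : β i = false) :
    {z | F (some (.x i)) z} = {some (WV.xl i : WV n m)} := by
  ext z; cases z with
  | none => simp [fwd]
  | some w => cases w <;> simp [fwd, fwd', Fin.ext_iff, hi] <;> omega

lemma inSet_x_false {i : Fin n} (hi : β i = false) :
    {z | F z (some (.x i))} =
      insert (some (WV.p i : WV n m)) ((fun j => some (WV.c j)) '' {j | i ∈ cl j}) := by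
  ext z; cases z with
  | none => simp [fwd]
  | some w => cases w <;> simp [fwd, fwd', Fin.ext_iff, hi] <;> first | omega | (rw [Fin.val_inj]; simp [eq_comm]) | (simp [Fin.val_inj])

lemma inSet_c (j : Fin m) :
    {z | F z (some (.c j))} =
      (fun i => some (WV.x i : WV n m)) '' {i | i ∈ cl j ∧ β i = true} := by
  ext z; cases z with
  | none => simp [fwd]
  | some w => cases w <;> simp [fwd, fwd', Fin.ext_iff] <;> first | omega | (rw [Fin.val_inj]; simp [eq_comm]) | (simp [Fin.val_inj])

lemma outSet_c (j : Fin m) :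
    {z | F (some (.c j)) z} =
      insert (some (WV.cleaf j 0 : WV n m)) (insert (some (.cleaf j 1))
        ((fun i => some (WV.x i : WV n m)) '' {i | i ∈ cl j ∧ β i = false})) := by
  ext z; cases z with
  | none => simp [fwd]
  | some w => cases w <;> simp [fwd, fwd'] <;> first | omega | (rw [Fin.val_inj]; simp [eq_comm]) | (simp [Fin.val_inj])

end Fwd


namespace Fwd

variable {n m : ℕ} (cl : Fin m → Finset (Fin n)) (β : Fin n → Bool)

local notation "F" => fwd cl β

lemma inj_c : Function.Injective (fun j : Fin m => (some (WV.c j) : Option (WV n m))) := by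
  intro a b h; simpa using h

lemma inj_x : Function.Injective (fun i : Fin n => (some (WV.x i) : Option (WV n m))) := by
  intro a b h; simpa using h

lemma ncard_clset (hcnt : ∀ i, (Finset.univ.filter fun j => i ∈ cl j).card = 3) (i : Fin n) :
    Set.ncard {j | i ∈ cl j} = 3 := by
  have : {j | i ∈ cl j} = ↑(Finset.univ.filter fun j => i ∈ cl j) := by ext j; simp
  rw [this, Set.ncard_coe_finset, hcnt i]

lemma true_set_eq {j : Fin m} {i0 : Fin n}
    (h : i0 ∈ cl j ∧ β i0 = true) (hu : ∀ i, i ∈ cl j ∧ β i = true → i = i0) :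
    {i | i ∈ cl j ∧ β i = true} = {i0} := by
  ext i; simp only [Set.mem_setOf_eq, Set.mem_singleton_iff]
  exact ⟨fun hi => hu i hi, fun hi => hi ▸ h⟩

lemma false_card {j : Fin m} {i0 : Fin n} (hsize : ∀ j, (cl j).card = 3)
    (h : i0 ∈ cl j ∧ β i0 = true) (hu : ∀ i, i ∈ cl j ∧ β i = true → i = i0) :
    Set.ncard {i | i ∈ cl j ∧ β i = false} = 2 := by
  have hset : {i | i ∈ cl j ∧ β i = false} = ↑((cl j).filter fun i => β i = false) := by
    ext i; simp
  have htrue : ((cl j).filter fun i => β i = true) = {i0} := by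
    ext i
    simp only [Finset.mem_filter, Finset.mem_singleton]
    exact ⟨fun hi => hu i hi, fun hi => hi ▸ h⟩
  have hsum : ((cl j).filter fun i => β i = true).card
      + ((cl j).filter fun i => β i = false).card = 3 := by
    rw [← hsize j]
    simpa [Bool.not_eq_true] using Finset.card_filter_add_card_filter_not
      (s := cl j) (p := fun i => β i = true)
  rw [hset, Set.ncard_coe_finset]
  rw [htrue, Finset.card_singleton] at hsum
  omega

/-- Master degree lemma for the forward orientation. -/
lemma master (hn : 1 ≤ n)
    (hsize : ∀ j, (cl j).card = 3)
    (hcnt : ∀ i, (Finset.univ.filter fun j => i ∈ cl j).card = 3)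
    (hβ : ∀ j : Fin m, ∃! i : Fin n, i ∈ cl j ∧ β i = true) :
    ∀ w : WV n m,
      (w ∈ wLeaves n m ∧ inDeg F (some w) = 1 ∧ outDeg F (some w) = 0) ∨
      (w ∉ wLeaves n m ∧ inDeg F (some w) = 1 ∧ outDeg F (some w) = 4) ∨
      (w ∉ wLeaves n m ∧ inDeg F (some w) = 4 ∧ outDeg F (some w) = 1) := by
  intro w
  have hleafout : ∀ w' ∈ wLeaves n m, outDeg F (some w') = 0 := by
    intro w' hw'; rw [outDeg, outSet_leaf cl β w' hw', Set.ncard_empty]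
  cases w with
  | s =>
    refine Or.inr (Or.inr ⟨by simp [wLeaves], ?_, ?_⟩)
    · rw [inDeg, inSet_s]
      exact ncard4 _ _ _ _ (by simp) (by simp) (by simp) (by simp) (by simp) (by simp)
    · rw [outDeg, outSet_s cl β hn, Set.ncard_singleton]
  | u =>
    refine Or.inr (Or.inl ⟨by simp [wLeaves], ?_, ?_⟩)
    · rw [inDeg, inSet_u, Set.ncard_singleton]
    · rw [outDeg, outSet_u]
      exact ncard4 _ _ _ _ (by simp) (by simp) (by simp) (by simp) (by simp) (by simp [Fin.ext_iff])
  | u' =>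
    refine Or.inr (Or.inl ⟨by simp [wLeaves], ?_, ?_⟩)
    · rw [inDeg, inSet_u', Set.ncard_singleton]
    · rw [outDeg, outSet_u']
      exact ncard4 _ _ _ _ (by simp) (by simp) (by simp) (by simp) (by simp) (by simp [Fin.ext_iff])
  | v =>
    refine Or.inr (Or.inl ⟨by simp [wLeaves], ?_, ?_⟩)
    · rw [inDeg, inSet_v, Set.ncard_singleton]
    · rw [outDeg, outSet_v]
      exact ncard4 _ _ _ _ (by simp) (by simp) (by simp) (by simp [Fin.ext_iff]) (by simp [Fin.ext_iff]) (by simp [Fin.ext_iff])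
  | v' =>
    refine Or.inr (Or.inl ⟨by simp [wLeaves], ?_, ?_⟩)
    · rw [inDeg, inSet_v', Set.ncard_singleton]
    · rw [outDeg, outSet_v']
      exact ncard4 _ _ _ _ (by simp) (by simp) (by simp) (by simp [Fin.ext_iff]) (by simp [Fin.ext_iff]) (by simp [Fin.ext_iff])
  | ul k =>
    refine Or.inl ⟨by simp [wLeaves], ?_, hleafout _ (by simp [wLeaves])⟩
    rw [inDeg, inSet_ul, Set.ncard_singleton]
  | ul' k =>
    refine Or.inl ⟨by simp [wLeaves], ?_, hleafout _ (by simp [wLeaves])⟩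
    rw [inDeg, inSet_ul', Set.ncard_singleton]
  | vl k =>
    refine Or.inl ⟨by simp [wLeaves], ?_, hleafout _ (by simp [wLeaves])⟩
    rw [inDeg, inSet_vl, Set.ncard_singleton]
  | vl' k =>
    refine Or.inl ⟨by simp [wLeaves], ?_, hleafout _ (by simp [wLeaves])⟩
    rw [inDeg, inSet_vl', Set.ncard_singleton]
  | p i =>
    refine Or.inr (Or.inl ⟨by simp [wLeaves], ?_, ?_⟩)
    · by_cases hi : (i : ℕ) = n - 1
      · rw [inDeg, inSet_p_top cl β hi, Set.ncard_singleton]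
      · rw [inDeg, inSet_p_mid cl β hi, Set.ncard_singleton]
    · by_cases hi : (i : ℕ) = 0
      · rw [outDeg, outSet_p_bot cl β hi]
        exact ncard4 _ _ _ _ (by simp) (by simp) (by simp) (by simp) (by simp) (by simp)
      · rw [outDeg, outSet_p_mid cl β hi]
        exact ncard4 _ _ _ _ (by simp) (by simp) (by simp) (by simp) (by simp) (by simp)
  | pl i =>
    refine Or.inl ⟨by simp [wLeaves], ?_, hleafout _ (by simp [wLeaves])⟩
    rw [inDeg, inSet_pl, Set.ncard_singleton]
  | pl' i =>
    refine Or.inl ⟨by simp [wLeaves], ?_, hleafout _ (by simp [wLeaves])⟩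
    rw [inDeg, inSet_pl', Set.ncard_singleton]
  | pl0 =>
    refine Or.inl ⟨by simp [wLeaves], ?_, hleafout _ (by simp [wLeaves])⟩
    rw [inDeg, inSet_pl0 cl β hn, Set.ncard_singleton]
  | xl i =>
    refine Or.inl ⟨by simp [wLeaves], ?_, hleafout _ (by simp [wLeaves])⟩
    rw [inDeg, inSet_xl, Set.ncard_singleton]
  | cleaf j k =>
    refine Or.inl ⟨by simp [wLeaves], ?_, hleafout _ (by simp [wLeaves])⟩
    rw [inDeg, inSet_cleaf, Set.ncard_singleton]
  | x i =>
    rcases Bool.eq_false_or_eq_true (β i) with hi | hi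
    · refine Or.inr (Or.inl ⟨by simp [wLeaves], ?_, ?_⟩)
      · rw [inDeg, inSet_x_true cl β hi, Set.ncard_singleton]
      · rw [outDeg, outSet_x_true cl β hi]
        rw [Set.ncard_insert_of_notMem (by simp)]
        rw [Set.ncard_image_of_injective _ inj_c, ncard_clset cl hcnt]
    · refine Or.inr (Or.inr ⟨by simp [wLeaves], ?_, ?_⟩)
      · rw [inDeg, inSet_x_false cl β hi]
        rw [Set.ncard_insert_of_notMem (by simp)]
        rw [Set.ncard_image_of_injective _ inj_c, ncard_clset cl hcnt]
      · rw [outDeg, outSet_x_false cl β hi, Set.ncard_singleton]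
  | c j =>
    obtain ⟨i0, hi0, hu⟩ := hβ j
    refine Or.inr (Or.inl ⟨by simp [wLeaves], ?_, ?_⟩)
    · rw [inDeg, inSet_c, true_set_eq cl β hi0 hu,
        Set.image_singleton, Set.ncard_singleton]
    · rw [outDeg, outSet_c]
      rw [Set.ncard_insert_of_notMem (by simp)]
      rw [Set.ncard_insert_of_notMem (by simp)]
      rw [Set.ncard_image_of_injective _ inj_x, false_card cl β hsize hi0 hu]

end Fwd


namespace Fwd

variable {n m : ℕ} (cl : Fin m → Finset (Fin n)) (β : Fin n → Bool)

local notation "F" => fwd cl β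

set_option maxHeartbeats 2000000 in
lemma fwd_arcs_adj : ∀ u w : WV n m, fwd' cl β u w →
    wAdj cl u w ∧ ¬ SamePair u w WV.u WV.u' := by
  intro u w h
  cases u <;> cases w <;> simp_all [fwd', wAdj, wBase, SamePair]

set_option maxHeartbeats 2000000 in
lemma fwd_orient : ∀ u w : WV n m, wAdj cl u w → ¬ SamePair u w WV.u WV.u' →
    (fwd' cl β u w ↔ ¬ fwd' cl β w u) := by
  intro u w hadj hsp
  cases u <;> cases w <;>
    simp_all [fwd', wAdj, wBase, SamePair] <;>
    first
      | omega
      | (rcases Bool.eq_false_or_eq_true (β _) with hb | hb <;> simp_all)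

lemma fwd_variantA : VariantA (wAdj cl) WV.u WV.u' (fwd cl β) := by
  refine ⟨Or.inl trivial, Or.inl rfl, Or.inr rfl, ?_, ?_, ?_, ?_⟩
  · intro o; cases o <;> simp [fwd]
  · intro w h; exact h
  · exact fwd_arcs_adj cl β
  · exact fwd_orient cl β

lemma fwd_irrefl : ∀ v : Option (WV n m), ¬ fwd cl β v v := by
  intro v h
  exact absurd (rk_lt h) (lt_irrefl _)

variable (hn : 1 ≤ n)
    (hsize : ∀ j, (cl j).card = 3)
    (hcnt : ∀ i, (Finset.univ.filter fun j => i ∈ cl j).card = 3)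
    (hβ : ∀ j : Fin m, ∃! i : Fin n, i ∈ cl j ∧ β i = true)

include hn hsize hcnt hβ

lemma fwd_phylo :
    IsRootedPhyloNetwork (fwd cl β) none (Option.some '' wLeaves n m) := by
  have hm := master cl β hn hsize hcnt hβ
  have hin0 : inDeg F (none : Option (WV n m)) = 0 := by
    rw [inDeg, inSet_none, Set.ncard_empty]
  have hout2 : outDeg F (none : Option (WV n m)) = 2 := by
    rw [outDeg, outSet_none]; exact ncard2 _ _ (by simp)
  refine ⟨fwd_acyclic cl β, fwd_irrefl cl β, hin0, by omega, ?_, ?_, ?_, ?_⟩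
  · intro v hv
    cases v with
    | none => rfl
    | some w => rcases hm w with ⟨_, h1, _⟩ | ⟨_, h1, _⟩ | ⟨_, h1, _⟩ <;> omega
  · intro v hv
    cases v with
    | none => omega
    | some w => rcases hm w with ⟨_, h1, h2⟩ | ⟨_, h1, h2⟩ | ⟨_, h1, h2⟩ <;> omega
  · ext v
    cases v with
    | none =>
      simp only [Set.mem_setOf_eq, hout2]
      simp
    | some w =>
      simp only [Set.mem_setOf_eq, Set.mem_image]
      constructor
      · intro h0
        rcases hm w with ⟨hl, _, h2⟩ | ⟨_, _, h2⟩ | ⟨_, _, h2⟩ <;> first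
          | exact ⟨w, hl, rfl⟩
          | omega
      · rintro ⟨w', hw', he⟩
        cases he
        rcases hm w with ⟨_, _, h2⟩ | ⟨hl, _, _⟩ | ⟨hl, _, _⟩ <;> first
          | exact h2
          | exact absurd hw' hl
  · intro v hv hout
    cases v with
    | none => exact absurd rfl hv
    | some w =>
      rcases hm w with ⟨_, h1, h2⟩ | ⟨_, h1, h2⟩ | ⟨_, h1, h2⟩
      · omega
      · exact Or.inl ⟨h1, by omega⟩
      · exact Or.inr ⟨by omega, by omega⟩

lemma fwd_funneled : Funneled (fwd cl β) := by
  have hm := master cl β hn hsize hcnt hβ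
  intro v hv
  cases v with
  | none => rw [inDeg, inSet_none, Set.ncard_empty] at hv; omega
  | some w => rcases hm w with ⟨_, h1, h2⟩ | ⟨_, h1, h2⟩ | ⟨_, h1, h2⟩ <;> omega

end Fwd


namespace Rev

variable {n m : ℕ} {cl : Fin m → Finset (Fin n)} {a b : WV n m}
  {D : Option (WV n m) → Option (WV n m) → Prop}

/-- the five internal vertices of the root gadget -/
def G (w : WV n m) : Prop :=
  w = .s ∨ w = .u ∨ w = .u' ∨ w = .v ∨ w = .v'

/-- vertices near the root gadget (possible endpoints of the root edge) -/
def NearRoot : WV n m → Prop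
  | .s | .u | .u' | .v | .v' | .ul _ | .ul' _ | .vl _ | .vl' _ => True
  | .p i => (i : ℕ) = n - 1
  | _ => False

/-- the root-gadget side of the cut `{s, p (n-1)}` -/
def SSide : WV n m → Prop
  | .s | .u | .u' | .v | .v' | .ul _ | .ul' _ | .vl _ | .vl' _ => True
  | _ => False

section Basic

variable (hva : VariantA (wAdj cl) a b D)
  (hnet : IsRootedPhyloNetwork D none (Option.some '' wLeaves n m))
  (hf : Funneled D)

include hnet in
lemma leaf_out {w : WV n m} (hw : w ∈ wLeaves n m) (z : Option (WV n m)) :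
    ¬ D (some w) z := by
  have h0 : outDeg D (some w) = 0 := by
    have : (some w) ∈ Option.some '' wLeaves n m := ⟨w, hw, rfl⟩
    rw [← hnet.2.2.2.2.2.2.1] at this
    exact this
  exact not_arc_of_outDeg_zero h0

include hnet in
lemma int_out {w : WV n m} (hw : w ∉ wLeaves n m) : outDeg D (some w) ≠ 0 := by
  intro h0
  have : (some w) ∈ {v | outDeg D v = 0} := h0
  rw [hnet.2.2.2.2.2.2.1] at this
  obtain ⟨w', hw', he⟩ := this
  cases he
  exact hw hw'

include hnet hf in
lemma dich {w : WV n m} (hw : w ∉ wLeaves n m) :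
    inDeg D (some w) = 1 ∨ (2 ≤ inDeg D (some w) ∧ outDeg D (some w) = 1) := by
  rcases hnet.2.2.2.2.2.2.2 (some w) (by simp) (int_out hnet hw) with ⟨h1, _⟩ | ⟨h1, _⟩
  · exact Or.inl h1
  · exact Or.inr ⟨h1, hf _ h1⟩

include hva in
lemma edge_or {w w' : WV n m} (hadj : wAdj cl w w') (hsp : ¬ SamePair w w' a b) :
    D (some w) (some w') ∨ D (some w') (some w) := by
  by_cases h : D (some w') (some w)
  · exact Or.inr h
  · exact Or.inl (((hva.2.2.2.2.2.2 w w' hadj hsp)).mpr h)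

include hva in
lemma no_both {w w' : WV n m} (h1 : D (some w) (some w')) (h2 : D (some w') (some w)) :
    False := by
  obtain ⟨hadj, hsp⟩ := hva.2.2.2.2.2.1 w w' h1
  exact ((hva.2.2.2.2.2.2 w w' hadj hsp).mp h1) h2

include hva hnet in
lemma pendant {w w' : WV n m} (hl : w' ∈ wLeaves n m) (hadj : wAdj cl w w')
    (hsp : ¬ SamePair w w' a b) : D (some w) (some w') := by
  rcases edge_or hva hadj hsp with h | h
  · exact h
  · exact absurd h (leaf_out hnet hl _)

include hnet hf in
lemma T_of_two {w : WV n m} {z1 z2 : Option (WV n m)}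
    (h1 : D (some w) z1) (h2 : D (some w) z2) (hne : z1 ≠ z2) :
    inDeg D (some w) = 1 := by
  have hout : 2 ≤ outDeg D (some w) := two_le_outDeg h1 h2 hne
  have hin : ¬ 2 ≤ inDeg D (some w) := by
    intro h
    have := hf _ h
    omega
  have hin0 : inDeg D (some w) ≠ 0 := by
    intro h
    exact absurd (hnet.2.2.2.2.1 _ h) (by simp)
  omega

include hnet in
lemma exists_in (w : WV n m) : ∃ z, D z (some w) := by
  apply exists_of_inDeg_ne_zero
  intro h
  exact absurd (hnet.2.2.2.2.1 _ h) (by simp)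

include hva in
lemma in_nbr {w : WV n m} {z : Option (WV n m)} (h : D z (some w)) :
    z = none ∨ ∃ w', z = some w' ∧ wAdj cl w' w := by
  cases z with
  | none => exact Or.inl rfl
  | some w' => exact Or.inr ⟨w', rfl, (hva.2.2.2.2.2.1 w' w h).1⟩

include hva in
lemma root_in {w : WV n m} (h : D none (some w)) : w = a ∨ w = b :=
  hva.2.2.2.2.1 w h

end Basic

lemma wAdj_comm {w w' : WV n m} (h : wAdj cl w w') : wAdj cl w' w := h.elim Or.inr Or.inl

lemma nbr_s {w : WV n m} (h : wAdj cl w .s) :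
    w = .u ∨ w = .u' ∨ w = .v ∨ w = .v' ∨ ∃ i : Fin n, w = .p i ∧ (i : ℕ) = n - 1 := by
  cases w <;> simp_all [wAdj, wBase]

lemma nbr_u {w : WV n m} (h : wAdj cl w .u) :
    w = .s ∨ w = .u' ∨ w = .v ∨ ∃ k, w = .ul k := by
  cases w <;> simp_all [wAdj, wBase]

lemma nbr_u' {w : WV n m} (h : wAdj cl w .u') :
    w = .s ∨ w = .u ∨ w = .v' ∨ ∃ k, w = .ul' k := by
  cases w <;> simp_all [wAdj, wBase]

lemma nbr_v {w : WV n m} (h : wAdj cl w .v) :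
    w = .s ∨ w = .u ∨ ∃ k, w = .vl k := by
  cases w <;> simp_all [wAdj, wBase]

lemma nbr_v' {w : WV n m} (h : wAdj cl w .v') :
    w = .s ∨ w = .u' ∨ ∃ k, w = .vl' k := by
  cases w <;> simp_all [wAdj, wBase]

lemma nbr_p {w : WV n m} {i : Fin n} (h : wAdj cl w (.p i)) :
    (w = .s ∧ (i : ℕ) = n - 1) ∨
    (∃ j : Fin n, w = .p j ∧ ((j : ℕ) + 1 = (i : ℕ) ∨ (i : ℕ) + 1 = (j : ℕ))) ∨
    w = .x i ∨ w = .pl i ∨ w = .pl' i ∨ (w = .pl0 ∧ (i : ℕ) = 0) := by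
  cases w <;> simp_all [wAdj, wBase] <;> tauto

lemma nbr_x {w : WV n m} {i : Fin n} (h : wAdj cl w (.x i)) :
    w = .p i ∨ w = .xl i ∨ ∃ j : Fin m, w = .c j ∧ i ∈ cl j := by
  cases w <;> simp_all [wAdj, wBase] <;> tauto

lemma nbr_c {w : WV n m} {j : Fin m} (h : wAdj cl w (.c j)) :
    (∃ i : Fin n, w = .x i ∧ i ∈ cl j) ∨ ∃ k, w = .cleaf j k := by
  cases w <;> simp_all [wAdj, wBase] <;> tauto

end Rev


namespace Rev

variable {n m : ℕ} {cl : Fin m → Finset (Fin n)} {a b : WV n m}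
  {D : Option (WV n m) → Option (WV n m) → Prop}

variable (hva : VariantA (wAdj cl) a b D)
  (hnet : IsRootedPhyloNetwork D none (Option.some '' wLeaves n m))
  (hf : Funneled D)

include hva hnet hf

/-- The root edge must have an endpoint among the internal root-gadget vertices. -/
lemma rootloc : G a ∨ G b := by
  by_contra hG
  push_neg at hG
  obtain ⟨hGa, hGb⟩ := hG
  have hacyc := hnet.1
  -- no SamePair for edges with a gadget endpoint
  have nspG : ∀ w w' : WV n m, G w → ¬ SamePair w w' a b := by
    rintro w w' hw (⟨rfl, rfl⟩ | ⟨rfl, rfl⟩)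
    · exact hGa hw
    · exact hGb hw
  have nspG' : ∀ w w' : WV n m, G w' → ¬ SamePair w w' a b := by
    rintro w w' hw (⟨rfl, rfl⟩ | ⟨rfl, rfl⟩)
    · exact hGb hw
    · exact hGa hw
  have noroot : ∀ w : WV n m, G w → ¬ D none (some w) := by
    intro w hw hr
    rcases root_in hva hr with rfl | rfl
    · exact hGa hw
    · exact hGb hw
  -- pendant arcs at u, u', v, v'
  have hGu : G (WV.u : WV n m) := by simp [G]
  have hGu' : G (WV.u' : WV n m) := by simp [G]
  have hGv : G (WV.v : WV n m) := by simp [G]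
  have hGv' : G (WV.v' : WV n m) := by simp [G]
  have hGs : G (WV.s : WV n m) := by simp [G]
  have hTu : inDeg D (some (WV.u : WV n m)) = 1 := by
    refine T_of_two hnet hf
      (pendant hva hnet (w' := WV.ul 0) (by simp [wLeaves]) (Or.inl trivial) (nspG _ _ hGu))
      (pendant hva hnet (w' := WV.ul 1) (by simp [wLeaves]) (Or.inl trivial) (nspG _ _ hGu))
      (by simp [Fin.ext_iff])
  have hTu' : inDeg D (some (WV.u' : WV n m)) = 1 := by
    refine T_of_two hnet hf
      (pendant hva hnet (w' := WV.ul' 0) (by simp [wLeaves]) (Or.inl trivial) (nspG _ _ hGu'))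
      (pendant hva hnet (w' := WV.ul' 1) (by simp [wLeaves]) (Or.inl trivial) (nspG _ _ hGu'))
      (by simp [Fin.ext_iff])
  have hTv : inDeg D (some (WV.v : WV n m)) = 1 := by
    refine T_of_two hnet hf
      (pendant hva hnet (w' := WV.vl 0) (by simp [wLeaves]) (Or.inl trivial) (nspG _ _ hGv))
      (pendant hva hnet (w' := WV.vl 1) (by simp [wLeaves]) (Or.inl trivial) (nspG _ _ hGv))
      (by simp [Fin.ext_iff])
  have hTv' : inDeg D (some (WV.v' : WV n m)) = 1 := by
    refine T_of_two hnet hf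
      (pendant hva hnet (w' := WV.vl' 0) (by simp [wLeaves]) (Or.inl trivial) (nspG _ _ hGv'))
      (pendant hva hnet (w' := WV.vl' 1) (by simp [wLeaves]) (Or.inl trivial) (nspG _ _ hGv'))
      (by simp [Fin.ext_iff])
  -- in-neighbour candidates
  have in_u : ∃ w' : WV n m, D (some w') (some .u) ∧ (w' = .s ∨ w' = .u' ∨ w' = .v) := by
    obtain ⟨z, hz⟩ := exists_in hnet (WV.u : WV n m)
    rcases in_nbr hva hz with rfl | ⟨w', rfl, hadj⟩
    · exact absurd hz (noroot _ hGu)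
    · rcases nbr_u hadj with rfl | rfl | rfl | ⟨k, rfl⟩
      · exact ⟨_, hz, Or.inl rfl⟩
      · exact ⟨_, hz, Or.inr (Or.inl rfl)⟩
      · exact ⟨_, hz, Or.inr (Or.inr rfl)⟩
      · exact absurd hz (leaf_out hnet (by simp [wLeaves]) _)
  have in_u' : ∃ w' : WV n m, D (some w') (some .u') ∧ (w' = .s ∨ w' = .u ∨ w' = .v') := by
    obtain ⟨z, hz⟩ := exists_in hnet (WV.u' : WV n m)
    rcases in_nbr hva hz with rfl | ⟨w', rfl, hadj⟩
    · exact absurd hz (noroot _ hGu')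
    · rcases nbr_u' hadj with rfl | rfl | rfl | ⟨k, rfl⟩
      · exact ⟨_, hz, Or.inl rfl⟩
      · exact ⟨_, hz, Or.inr (Or.inl rfl)⟩
      · exact ⟨_, hz, Or.inr (Or.inr rfl)⟩
      · exact absurd hz (leaf_out hnet (by simp [wLeaves]) _)
  have in_v : ∃ w' : WV n m, D (some w') (some .v) ∧ (w' = .s ∨ w' = .u) := by
    obtain ⟨z, hz⟩ := exists_in hnet (WV.v : WV n m)
    rcases in_nbr hva hz with rfl | ⟨w', rfl, hadj⟩
    · exact absurd hz (noroot _ hGv)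
    · rcases nbr_v hadj with rfl | rfl | ⟨k, rfl⟩
      · exact ⟨_, hz, Or.inl rfl⟩
      · exact ⟨_, hz, Or.inr rfl⟩
      · exact absurd hz (leaf_out hnet (by simp [wLeaves]) _)
  have in_v' : ∃ w' : WV n m, D (some w') (some .v') ∧ (w' = .s ∨ w' = .u') := by
    obtain ⟨z, hz⟩ := exists_in hnet (WV.v' : WV n m)
    rcases in_nbr hva hz with rfl | ⟨w', rfl, hadj⟩
    · exact absurd hz (noroot _ hGv')
    · rcases nbr_v' hadj with rfl | rfl | ⟨k, rfl⟩
      · exact ⟨_, hz, Or.inl rfl⟩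
      · exact ⟨_, hz, Or.inr rfl⟩
      · exact absurd hz (leaf_out hnet (by simp [wLeaves]) _)
  -- edge orientation helper for gadget edges
  have eor : ∀ w w' : WV n m, G w → wAdj cl w w' →
      D (some w) (some w') ∨ D (some w') (some w) :=
    fun w w' hw hadj => edge_or hva hadj (nspG _ _ hw)
  -- now split on the type of s
  rcases dich hnet hf (w := (WV.s : WV n m)) (by simp [wLeaves]) with hs1 | ⟨_, hout1⟩
  · -- s is a tree vertex with a unique in-neighbour w0
    obtain ⟨z, hz⟩ := exists_in hnet (WV.s : WV n m)
    rcases in_nbr hva hz with rfl | ⟨w0, rfl, hadj⟩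
    · exact absurd hz (noroot _ hGs)
    have souts : ∀ g : WV n m, wAdj cl WV.s g → g ≠ w0 → D (some .s) (some g) := by
      intro g hadjg hne
      rcases eor .s g hGs hadjg with h | h
      · exact h
      · exact absurd (Option.some.injEq .. ▸ in_unique hs1 h hz) (by simpa using hne)
    rcases nbr_s hadj with rfl | rfl | rfl | rfl | ⟨i, rfl, hi⟩
    · -- in from u
      have hsv : D (some .s) (some .v) := souts _ (Or.inl trivial) (by simp)
      have hsu' : D (some .s) (some .u') := souts _ (Or.inl trivial) (by simp)
      -- v's unique in-arc is from s, so edge u-v is directed v → u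
      have hvu : D (some .v) (some .u) := by
        rcases eor .u .v hGu (Or.inl trivial) with h | h
        · exact absurd (in_unique hTv h hsv) (by simp)
        · exact h
      -- edge u-u' is directed u → u'
      have huu' : D (some .u) (some .u') := by
        rcases eor .u .u' hGu (Or.inl trivial) with h | h
        · exact h
        · exact absurd (in_unique hTu h hvu) (by simp)
      exact absurd (in_unique hTu' huu' hsu') (by simp)
    · -- in from u'
      have hsv' : D (some .s) (some .v') := souts _ (Or.inl trivial) (by simp)
      have hsu : D (some .s) (some .u) := souts _ (Or.inl trivial) (by simp)
      have hv'u' : D (some .v') (some .u') := by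
        rcases eor .u' .v' hGu' (Or.inl trivial) with h | h
        · exact absurd (in_unique hTv' h hsv') (by simp)
        · exact h
      have hu'u : D (some .u') (some .u) := by
        rcases eor .u .u' hGu (Or.inl trivial) with h | h
        · exact absurd (in_unique hTu' h hv'u') (by simp)
        · exact h
      exact absurd (in_unique hTu hu'u hsu) (by simp)
    · -- in from v
      have hsu : D (some .s) (some .u) := souts _ (Or.inl trivial) (by simp)
      have hsu' : D (some .s) (some .u') := souts _ (Or.inl trivial) (by simp)
      rcases eor .u .u' hGu (Or.inl trivial) with h | h
      · exact absurd (in_unique hTu' h hsu') (by simp)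
      · exact absurd (in_unique hTu h hsu) (by simp)
    · -- in from v'
      have hsu : D (some .s) (some .u) := souts _ (Or.inl trivial) (by simp)
      have hsu' : D (some .s) (some .u') := souts _ (Or.inl trivial) (by simp)
      rcases eor .u .u' hGu (Or.inl trivial) with h | h
      · exact absurd (in_unique hTu' h hsu') (by simp)
      · exact absurd (in_unique hTu h hsu) (by simp)
    · -- in from p i
      have hsu : D (some .s) (some .u) := souts _ (Or.inl trivial) (by simp)
      have hsu' : D (some .s) (some .u') := souts _ (Or.inl trivial) (by simp)
      rcases eor .u .u' hGu (Or.inl trivial) with h | h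
      · exact absurd (in_unique hTu' h hsu') (by simp)
      · exact absurd (in_unique hTu h hsu) (by simp)
  · -- s is a reticulation with a single out-arc
    have sone : ∀ g g' : WV n m, D (some .s) (some g) → D (some .s) (some g') → g = g' := by
      intro g g' h h'
      have := out_unique hout1 h h'
      simpa using this
    by_cases hsu : D (some .s) (some .u)
    · have hu's : D (some .u') (some .s) := by
        rcases eor .s .u' hGs (Or.inl trivial) with h | h
        · exact absurd (sone _ _ h hsu) (by simp)
        · exact h
      have huv : D (some .u) (some .v) := by
        rcases eor .u .v hGu (Or.inl trivial) with h | h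
        · exact h
        · exact absurd (in_unique hTu h hsu) (by simp)
      have hu'v' : D (some .u') (some .v') := by
        obtain ⟨w', hw', hc⟩ := in_v'
        rcases hc with rfl | rfl
        · exact absurd (sone _ _ hw' hsu) (by simp)
        · exact hw'
      have huu' : D (some .u) (some .u') := by
        obtain ⟨w', hw', hc⟩ := in_u'
        rcases hc with rfl | rfl | rfl
        · exact absurd (sone _ _ hw' hsu) (by simp)
        · exact hw'
        · exact absurd hw' (fun h => no_both hva hu'v' h)
      exact hacyc _ (Relation.TransGen.head huu' (Relation.TransGen.head hu's
        (Relation.TransGen.single hsu)))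
    by_cases hsu' : D (some .s) (some .u')
    · have hus : D (some .u) (some .s) := by
        rcases eor .s .u hGs (Or.inl trivial) with h | h
        · exact absurd h hsu
        · exact h
      have huv : D (some .u) (some .v) := by
        obtain ⟨w', hw', hc⟩ := in_v
        rcases hc with rfl | rfl
        · exact absurd (sone _ _ hw' hsu') (by simp)
        · -- v's in-arc is from u, so the edge u-v is u → v
          exact hw'
      have hu'u : D (some .u') (some .u) := by
        obtain ⟨w', hw', hc⟩ := in_u
        rcases hc with rfl | rfl | rfl
        · exact absurd hw' hsu
        · exact hw'
        · exact absurd hw' (fun h => no_both hva huv h)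
      exact hacyc _ (Relation.TransGen.head hu'u (Relation.TransGen.head hus
        (Relation.TransGen.single hsu')))
    by_cases hsv : D (some .s) (some .v)
    · have hus : D (some .u) (some .s) := by
        rcases eor .s .u hGs (Or.inl trivial) with h | h
        · exact absurd h hsu
        · exact h
      have hvu : D (some .v) (some .u) := by
        rcases eor .u .v hGu (Or.inl trivial) with h | h
        · exact absurd (in_unique hTv h hsv) (by simp)
        · exact h
      exact hacyc _ (Relation.TransGen.head hsv (Relation.TransGen.head hvu
        (Relation.TransGen.single hus)))
    by_cases hsv' : D (some .s) (some .v')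
    · have hu's : D (some .u') (some .s) := by
        rcases eor .s .u' hGs (Or.inl trivial) with h | h
        · exact absurd h hsu'
        · exact h
      have hv'u' : D (some .v') (some .u') := by
        rcases eor .u' .v' hGu' (Or.inl trivial) with h | h
        · exact absurd (in_unique hTv' h hsv') (by simp)
        · exact h
      exact hacyc _ (Relation.TransGen.head hsv' (Relation.TransGen.head hv'u'
        (Relation.TransGen.single hu's)))
    · -- all four gadget edges point into s
      have hvs : D (some .v) (some .s) := by
        rcases eor .s .v hGs (Or.inl trivial) with h | h
        · exact absurd h hsv
        · exact h
      have hv's : D (some .v') (some .s) := by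
        rcases eor .s .v' hGs (Or.inl trivial) with h | h
        · exact absurd h hsv'
        · exact h
      have huv : D (some .u) (some .v) := by
        obtain ⟨w', hw', hc⟩ := in_v
        rcases hc with rfl | rfl
        · exact absurd hw' hsv
        · exact hw'
      have hu'v' : D (some .u') (some .v') := by
        obtain ⟨w', hw', hc⟩ := in_v'
        rcases hc with rfl | rfl
        · exact absurd hw' hsv'
        · exact hw'
      have hu'u : D (some .u') (some .u) := by
        obtain ⟨w', hw', hc⟩ := in_u
        rcases hc with rfl | rfl | rfl
        · exact absurd hw' hsu
        · exact hw'
        · exact absurd hw' (fun h => no_both hva huv h)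
      obtain ⟨w', hw', hc⟩ := in_u'
      rcases hc with rfl | rfl | rfl
      · exact absurd hw' hsu'
      · exact no_both hva hw' hu'u
      · exact no_both hva hu'v' hw'

end Rev


namespace Rev

variable {n m : ℕ} {cl : Fin m → Finset (Fin n)} {a b : WV n m}
  {D : Option (WV n m) → Option (WV n m) → Prop}

variable (hva : VariantA (wAdj cl) a b D)
  (hnet : IsRootedPhyloNetwork D none (Option.some '' wLeaves n m))
  (hf : Funneled D)

lemma NR_not_S {w : WV n m} (h1 : NearRoot w) (h2 : ¬ SSide w) :
    ∃ i : Fin n, w = .p i ∧ (i : ℕ) = n - 1 := by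
  cases w <;> simp_all [NearRoot, SSide]

include hva hnet hf

lemma aux_nbrG {g w' : WV n m} (hg : G g) (hadj : wAdj cl g w') : NearRoot w' := by
  rcases hg with rfl | rfl | rfl | rfl | rfl
  · rcases nbr_s (wAdj_comm hadj) with rfl | rfl | rfl | rfl | ⟨i, rfl, hi⟩ <;>
      simp_all [NearRoot]
  · rcases nbr_u (wAdj_comm hadj) with rfl | rfl | rfl | ⟨k, rfl⟩ <;> simp_all [NearRoot]
  · rcases nbr_u' (wAdj_comm hadj) with rfl | rfl | rfl | ⟨k, rfl⟩ <;> simp_all [NearRoot]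
  · rcases nbr_v (wAdj_comm hadj) with rfl | rfl | ⟨k, rfl⟩ <;> simp_all [NearRoot]
  · rcases nbr_v' (wAdj_comm hadj) with rfl | rfl | ⟨k, rfl⟩ <;> simp_all [NearRoot]

lemma notab : ∀ w : WV n m, (w = a ∨ w = b) → NearRoot w := by
  have hab : wAdj cl a b := hva.1
  intro w hw
  rcases rootloc hva hnet hf with hG | hG
  · rcases hw with rfl | rfl
    · rcases hG with rfl | rfl | rfl | rfl | rfl <;> simp [NearRoot]
    · exact aux_nbrG hva hnet hf hG hab
  · rcases hw with rfl | rfl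
    · exact aux_nbrG hva hnet hf hG (wAdj_comm hab)
    · rcases hG with rfl | rfl | rfl | rfl | rfl <;> simp [NearRoot]

lemma p_s_aux {g : WV n m} {i : Fin n} (hG : G g) (hadj : wAdj cl g (.p i)) :
    g = .s ∧ (i : ℕ) = n - 1 := by
  rcases hG with rfl | rfl | rfl | rfl | rfl <;>
    rcases nbr_p hadj with ⟨h', hi⟩ | ⟨j, h', _⟩ | h' | h' | h' | ⟨h', _⟩ <;> simp_all

lemma p_s {i : Fin n} (h : (WV.p i : WV n m) = a ∨ .p i = b) :
    ((WV.s : WV n m) = a ∨ (WV.s : WV n m) = b) ∧ (i : ℕ) = n - 1 := by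
  have hab : wAdj cl a b := hva.1
  have hG := rootloc hva hnet hf
  rcases h with h | h
  · have hGb : G b := by
      rcases hG with hGa | hGb
      · exfalso; rw [← h] at hGa; simp [G] at hGa
      · exact hGb
    rw [← h] at hab
    have := p_s_aux hva hnet hf hGb (wAdj_comm hab)
    exact ⟨Or.inr this.1.symm, this.2⟩
  · have hGa : G a := by
      rcases hG with hGa | hGb
      · exact hGa
      · exfalso; rw [← h] at hGb; simp [G] at hGb
    rw [← h] at hab
    have := p_s_aux hva hnet hf hGa hab
    exact ⟨Or.inl this.1.symm, this.2⟩

/-- no edge having an endpoint away from the root gadget is the root edge -/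
lemma nspNR {w w' : WV n m} (h : ¬ NearRoot w') : ¬ SamePair w w' a b := by
  rintro (⟨_, rfl⟩ | ⟨_, rfl⟩)
  · exact h (notab hva hnet hf _ (Or.inr rfl))
  · exact h (notab hva hnet hf _ (Or.inl rfl))

lemma reach : ∀ o : Option (WV n m), Relation.ReflTransGen D none o := by
  have hwfT : WellFounded (Relation.TransGen D) :=
    @Finite.wellFounded_of_trans_of_irrefl _ _ _ inferInstance ⟨hnet.1⟩
  have hwf : WellFounded D := Subrelation.wf (fun h => Relation.TransGen.single h) hwfT
  intro o
  induction o using hwf.induction with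
  | _ o ih =>
    by_cases ho : o = none
    · subst ho; exact Relation.ReflTransGen.refl
    · have h0 : inDeg D o ≠ 0 := fun h => ho (hnet.2.2.2.2.1 _ h)
      obtain ⟨z, hz⟩ := exists_of_inDeg_ne_zero h0
      exact (ih z hz).tail hz

/-- `SOpt`: root-side of the cut -/
def SOpt : Option (WV n m) → Prop := fun o => o = none ∨ ∃ w, o = some w ∧ SSide w

omit hva hnet hf in
lemma cross {t : Option (WV n m)} (hnt : ¬ SOpt t) :
    ∀ {x : Option (WV n m)}, Relation.ReflTransGen D x t → SOpt x →
      ∃ y z, SOpt y ∧ ¬ SOpt z ∧ D y z := by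
  intro x h
  induction h using Relation.ReflTransGen.head_induction_on with
  | refl => exact fun hx => absurd hx hnt
  | head hxy _ ih =>
    intro hx
    rename_i x' y' _
    by_cases hy : SOpt y'
    · exact ih hy
    · exact ⟨x', y', hx, hy, hxy⟩

lemma entry (hn : 1 ≤ n) :
    ∃ z, D z (some (WV.p ⟨n - 1, by omega⟩ : WV n m)) ∧ (z = none ∨ z = some .s) := by
  have hnt : ¬ SOpt (some (WV.p ⟨n - 1, by omega⟩ : WV n m)) := by
    rintro (h | ⟨w, hw, hs⟩)
    · exact nomatch h
    · cases hw; simp [SSide] at hs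
  obtain ⟨y, z, hy, hz, hD⟩ :=
    cross hnt (reach hva hnet hf (some (WV.p ⟨n - 1, by omega⟩))) (Or.inl rfl)
  have hzz : ∃ w : WV n m, z = some w ∧ ¬ SSide w := by
    cases z with
    | none => exact absurd (Or.inl rfl) hz
    | some w => exact ⟨w, rfl, fun hs => hz (Or.inr ⟨w, rfl, hs⟩)⟩
  obtain ⟨w, rfl, hws⟩ := hzz
  rcases hy with rfl | ⟨w0, rfl, hw0⟩
  · -- crossing arc from the root
    have hnr : NearRoot w := notab hva hnet hf _ (root_in hva hD)
    obtain ⟨i, rfl, hi⟩ := NR_not_S hnr hws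
    have : i = (⟨n - 1, by omega⟩ : Fin n) := Fin.ext (by simpa using hi)
    rw [this] at hD
    exact ⟨none, hD, Or.inl rfl⟩
  · have hadj : wAdj cl w0 w := (hva.2.2.2.2.2.1 w0 w hD).1
    rcases hw0' : w0 with s | u | u' | v | v' | ul | ul' | vl | vl' |
      p | pl | pl' | pl0 | x | xl | c | cleaf <;> subst hw0'
    case s =>
      rcases nbr_s (wAdj_comm hadj) with rfl | rfl | rfl | rfl | ⟨i, rfl, hi⟩
      · exact absurd (by simp [SSide]) hws
      · exact absurd (by simp [SSide]) hws
      · exact absurd (by simp [SSide]) hws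
      · exact absurd (by simp [SSide]) hws
      · have : i = (⟨n - 1, by omega⟩ : Fin n) := Fin.ext (by simpa using hi)
        rw [this] at hD
        exact ⟨some .s, hD, Or.inr rfl⟩
    case u =>
      rcases nbr_u (wAdj_comm hadj) with rfl | rfl | rfl | ⟨k, rfl⟩ <;>
        exact absurd (by simp [SSide]) hws
    case u' =>
      rcases nbr_u' (wAdj_comm hadj) with rfl | rfl | rfl | ⟨k, rfl⟩ <;>
        exact absurd (by simp [SSide]) hws
    case v =>
      rcases nbr_v (wAdj_comm hadj) with rfl | rfl | ⟨k, rfl⟩ <;>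
        exact absurd (by simp [SSide]) hws
    case v' =>
      rcases nbr_v' (wAdj_comm hadj) with rfl | rfl | ⟨k, rfl⟩ <;>
        exact absurd (by simp [SSide]) hws
    all_goals try exact False.elim hw0
    all_goals exact absurd hD (leaf_out hnet (by simp [wLeaves]) _)

end Rev


namespace Rev

variable {n m : ℕ} {cl : Fin m → Finset (Fin n)} {a b : WV n m}
  {D : Option (WV n m) → Option (WV n m) → Prop}

variable (hva : VariantA (wAdj cl) a b D)
  (hnet : IsRootedPhyloNetwork D none (Option.some '' wLeaves n m))
  (hf : Funneled D)

include hva hnet hf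

/-- every caterpillar vertex is a tree vertex -/
lemma hpT (i : Fin n) : inDeg D (some (WV.p i : WV n m)) = 1 := by
  refine T_of_two hnet hf
    (pendant hva hnet (w' := WV.pl i) (by simp [wLeaves]) (Or.inl rfl)
      (nspNR hva hnet hf (by simp [NearRoot])))
    (pendant hva hnet (w' := WV.pl' i) (by simp [wLeaves]) (Or.inl rfl)
      (nspNR hva hnet hf (by simp [NearRoot])))
    (by simp)

/-- what it means to be the upward neighbour of `p i` -/
def AboveP (i : Fin n) (z : Option (WV n m)) : Prop :=
  z = none ∨ z = some .s ∨ ∃ j : Fin n, (i : ℕ) + 1 = (j : ℕ) ∧ z = some (.p j)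

lemma hAbove (hn : 1 ≤ n) (i : Fin n) :
    ∃ z, D z (some (WV.p i : WV n m)) ∧ AboveP i z := by
  have key : ∀ k : ℕ, ∀ i : Fin n, (i : ℕ) + k = n - 1 →
      ∃ z, D z (some (WV.p i : WV n m)) ∧ AboveP i z := by
    intro k
    induction k with
    | zero =>
      intro i hi
      have : i = (⟨n - 1, by omega⟩ : Fin n) := Fin.ext (by simpa using hi)
      rw [this]
      obtain ⟨z, hz, hzs⟩ := entry hva hnet hf hn
      exact ⟨z, hz, hzs.imp id Or.inl⟩
    | succ k ih =>
      intro i hi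
      set i' : Fin n := ⟨(i : ℕ) + 1, by omega⟩ with hi'
      obtain ⟨z, hz, hab'⟩ := ih i' (by simp [hi']; omega)
      have hT := hpT hva hnet hf i'
      have hadj : wAdj cl (WV.p i' : WV n m) (.p i) := by
        refine Or.inr ?_
        show (i : ℕ) + 1 = (i' : ℕ)
        simp [hi']
      have hnsp : ¬ SamePair (WV.p i' : WV n m) (.p i) a b :=
        nspNR hva hnet hf (by simp [NearRoot]; omega)
      rcases edge_or hva hadj hnsp with h | h
      · exact ⟨some (.p i'), h, Or.inr (Or.inr ⟨i', by simp [hi'], rfl⟩)⟩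
      · exfalso
        have := in_unique hT h hz
        rcases hab' with rfl | rfl | ⟨j, hj, rfl⟩
        · exact nomatch this
        · simp at this
        · rw [Option.some.injEq, WV.p.injEq] at this
          subst this
          simp [hi'] at hj
          omega
  exact key (n - 1 - (i : ℕ)) i (by omega)

/-- the caterpillar sends an arc to each variable vertex -/
lemma hpx (hn : 1 ≤ n) (i : Fin n) :
    D (some (WV.p i : WV n m)) (some (.x i)) := by
  obtain ⟨z, hz, hab'⟩ := hAbove hva hnet hf hn i
  have hadj : wAdj cl (WV.p i : WV n m) (.x i) := Or.inl rfl
  rcases edge_or hva hadj (nspNR hva hnet hf (by simp [NearRoot])) with h | h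
  · exact h
  · exfalso
    have := in_unique (hpT hva hnet hf i) h hz
    rcases hab' with rfl | rfl | ⟨j, hj, rfl⟩ <;> simp at this

/-- every clause vertex is a tree vertex -/
lemma hcT (j : Fin m) : inDeg D (some (WV.c j : WV n m)) = 1 := by
  refine T_of_two hnet hf
    (pendant hva hnet (w' := WV.cleaf j 0) (by simp [wLeaves]) (Or.inl rfl)
      (nspNR hva hnet hf (by simp [NearRoot])))
    (pendant hva hnet (w' := WV.cleaf j 1) (by simp [wLeaves]) (Or.inl rfl)
      (nspNR hva hnet hf (by simp [NearRoot])))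
    (by simp [Fin.ext_iff])

/-- each variable vertex sends an arc to its pendant leaf -/
lemma hxxl (i : Fin n) : D (some (WV.x i : WV n m)) (some (.xl i)) :=
  pendant hva hnet (by simp [wLeaves]) (Or.inl rfl)
    (nspNR hva hnet hf (by simp [NearRoot]))

/-- each clause vertex receives an arc from one of its variables -/
lemma hcin (j : Fin m) :
    ∃ i : Fin n, i ∈ cl j ∧ D (some (WV.x i : WV n m)) (some (.c j)) := by
  obtain ⟨z, hz⟩ := exists_in hnet (WV.c j : WV n m)
  rcases in_nbr hva hz with rfl | ⟨w', rfl, hadj⟩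
  · exfalso
    have := notab hva hnet hf _ (root_in hva hz)
    simp [NearRoot] at this
  · rcases nbr_c hadj with ⟨i, rfl, hij⟩ | ⟨k, rfl⟩
    · exact ⟨i, hij, hz⟩
    · exact absurd hz (leaf_out hnet (by simp [wLeaves]) _)

/-- a variable sending an arc to one clause sends arcs to all its clauses -/
lemma hxT (hn : 1 ≤ n) {i : Fin n} {j : Fin m}
    (h : D (some (WV.x i : WV n m)) (some (.c j)))
    {j' : Fin m} (hj' : i ∈ cl j') : D (some (WV.x i : WV n m)) (some (.c j')) := by
  have h1 : inDeg D (some (WV.x i : WV n m)) = 1 :=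
    T_of_two hnet hf h (hxxl hva hnet hf i) (by simp)
  have hadj : wAdj cl (WV.x i : WV n m) (.c j') := Or.inl hj'
  rcases edge_or hva hadj (nspNR hva hnet hf (by simp [NearRoot])) with h' | h'
  · exact h'
  · exfalso
    have := in_unique h1 h' (hpx hva hnet hf hn i)
    simp at this

/-- Reverse direction: a funneled `C_A`-orientation yields a 1-in-3 assignment. -/
lemma reverse (hn : 1 ≤ n) :
    ∃ β : Fin n → Bool, ∀ j : Fin m, ∃! i : Fin n, i ∈ cl j ∧ β i = true := by
  classical
  refine ⟨fun i => decide (∃ j : Fin m, D (some (WV.x i)) (some (.c j))), fun j => ?_⟩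
  obtain ⟨i0, hi0, harc⟩ := hcin hva hnet hf j
  refine ⟨i0, ⟨hi0, by simp only [decide_eq_true_eq]; exact ⟨j, harc⟩⟩, ?_⟩
  rintro i1 ⟨hi1, hb⟩
  simp only [decide_eq_true_eq] at hb
  obtain ⟨j1, hj1⟩ := hb
  have harc1 : D (some (WV.x i1)) (some (.c j)) := hxT hva hnet hf hn hj1 hi1
  have := in_unique (hcT hva hnet hf j) harc1 harc
  simpa using this

end Rev

/-- Claim in Theorem `hardness_exactly_5`: an instance of
Positive 1-in-3 SAT (clauses of size 3, each variable in exactly three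
clauses) has a truth assignment setting exactly one variable of each clause to
true iff the constructed unrooted phylogenetic network `U` (all of whose
non-leaf vertices have degree 5) has a funneled `C_A`-orientation, where `C`
is the class of rooted phylogenetic networks. -/
theorem one_in_three_sat_iff_funneled_CA_orientation
    (n m : ℕ) (hn : 1 ≤ n) (cl : Fin m → Finset (Fin n))
    (hsize : ∀ j, (cl j).card = 3)
    (hcnt : ∀ i, (Finset.univ.filter fun j => i ∈ cl j).card = 3) :
    (∃ β : Fin n → Bool,
        ∀ j : Fin m, ∃! i : Fin n, i ∈ cl j ∧ β i = true) ↔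
    (∃ (a b : WV n m) (D : Option (WV n m) → Option (WV n m) → Prop),
        VariantA (wAdj cl) a b D ∧
        IsRootedPhyloNetwork D none (Option.some '' wLeaves n m) ∧
        Funneled D) := by
  constructor
  · rintro ⟨β, hβ⟩
    exact ⟨.u, .u', Fwd.fwd cl β, Fwd.fwd_variantA cl β,
      Fwd.fwd_phylo cl β hn hsize hcnt hβ, Fwd.fwd_funneled cl β hn hsize hcnt hβ⟩
  · rintro ⟨a, b, D, hva, hnet, hf⟩
    exact Rev.reverse hva hnet hf hn

end PaperFormalization
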